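/- Let G be a finite group, let K be a Carter subgroup of G, and let z ∈ Z(K) with z ≠ 1. Assume that any two Carter subgroups of C_G(z) are conjugate in C_G(z). If H is a Carter subgroup of G that is not conjugate to K in G, then z is not conjugate in G to any element of the centre Z(H) of H. -/

import Mathlib

/-- A Carter subgroup of a group `G` is a nilpotent self-normalizing subgroup. -/
def IsCarterSubgroup {G : Type*} [Group G] (K : Subgroup G) : Prop :=
  Group.IsNilpotent K ∧ Subgroup.normalizer (K : Set G) = K

/-- A Carter subgroup of `G` contained in `C` is a Carter subgroup of `C`. -/
lemma isCarter_subgroupOf {G : Type*} [Group G] {K C : Subgroup G} (hle : K ≤ C)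
    (hK : IsCarterSubgroup K) : IsCarterSubgroup (K.subgroupOf C) := by
  constructor
  · have := hK.1
    exact nilpotent_of_mulEquiv (Subgroup.subgroupOfEquivOfLe hle).symm
  · refine le_antisymm (fun x hx => ?_) Subgroup.le_normalizer
    rw [Subgroup.mem_normalizer_iff] at hx
    have hxK : (x : G) ∈ Subgroup.normalizer (K : Set G) := by
      rw [Subgroup.mem_normalizer_iff]
      intro n
      constructor
      · intro hn
        exact (hx ⟨n, hle hn⟩).mp hn
      · intro hn
        have hnC : n ∈ C := by
          have h1 : (x : G) * n * (x : G)⁻¹ ∈ C := hle hn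
          have := C.mul_mem (C.mul_mem (C.inv_mem x.2) h1) x.2
          simpa [mul_assoc] using this
        have := (hx ⟨n, hnC⟩).mpr (by simpa [Subgroup.mem_subgroupOf] using hn)
        simpa [Subgroup.mem_subgroupOf] using this
    rw [hK.2] at hxK
    exact hxK

/-- Conjugates of Carter subgroups are Carter subgroups. -/
lemma isCarter_map_conj {G : Type*} [Group G] {K : Subgroup G} (hK : IsCarterSubgroup K)
    (g : G) : IsCarterSubgroup (K.map (MulAut.conj g).toMonoidHom) := by
  constructor
  · have := hK.1
    exact nilpotent_of_mulEquiv ((MulAut.conj g : G ≃* G).subgroupMap K)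
  · rw [← Subgroup.map_equiv_normalizer_eq K (MulAut.conj g : G ≃* G), hK.2]

theorem not_conjugate_to_center_of_nonconjugate_carter {G : Type*} [Group G] [Finite G]
    (K : Subgroup G) (hK : IsCarterSubgroup K)
    (z : G) (hz : z ≠ 1) (hzK : z ∈ K) (hzc : ∀ k ∈ K, z * k = k * z)
    (hconj : ∀ K₁ K₂ : Subgroup ↥(Subgroup.centralizer {z}),
      IsCarterSubgroup K₁ → IsCarterSubgroup K₂ →
      ∃ g : ↥(Subgroup.centralizer {z}), K₁.map (MulAut.conj g).toMonoidHom = K₂)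
    (H : Subgroup G) (hH : IsCarterSubgroup H)
    (hnc : ¬ ∃ g : G, K.map (MulAut.conj g).toMonoidHom = H) :
    ∀ g h : G, h ∈ H → (∀ k ∈ H, h * k = k * h) → g⁻¹ * z * g ≠ h := by
  intro g h hhH hcomm heq
  set C := Subgroup.centralizer ({z} : Set G) with hC
  -- K ≤ C
  have hKC : K ≤ C := by
    intro k hk
    rw [Subgroup.mem_centralizer_iff]
    intro m hm
    rw [Set.mem_singleton_iff] at hm; subst hm
    exact hzc k hk
  -- z = g * h * g⁻¹
  have hzgh : z = g * h * g⁻¹ := by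
    rw [← heq]; group
  -- H' := gHg⁻¹ ≤ C
  set H' := H.map (MulAut.conj g).toMonoidHom with hH'
  have hH'C : H' ≤ C := by
    intro x hx
    rcases hx with ⟨y, hy, rfl⟩
    rw [Subgroup.mem_centralizer_iff]
    intro m hm
    rw [Set.mem_singleton_iff] at hm
    rw [hm, hzgh]
    have key : g * h * g⁻¹ * (g * y * g⁻¹) = g * y * g⁻¹ * (g * h * g⁻¹) := by
      calc g * h * g⁻¹ * (g * y * g⁻¹) = g * (h * y) * g⁻¹ := by group
        _ = g * (y * h) * g⁻¹ := by rw [hcomm y hy]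
        _ = g * y * g⁻¹ * (g * h * g⁻¹) := by group
    simpa [MulAut.conj_apply, mul_assoc] using key
  -- Both are Carter in C
  have hKc : IsCarterSubgroup (K.subgroupOf C) := isCarter_subgroupOf hKC hK
  have hH'c : IsCarterSubgroup (H'.subgroupOf C) :=
    isCarter_subgroupOf hH'C (isCarter_map_conj hH g)
  obtain ⟨c, hc⟩ := hconj _ _ hKc hH'c
  apply hnc
  -- map both sides back to G
  have hmap := congrArg (Subgroup.map C.subtype) hc
  rw [Subgroup.subgroupOf_map_subtype, Subgroup.map_map] at hmap
  have hcomp : (C.subtype.comp (MulAut.conj c).toMonoidHom)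
      = ((MulAut.conj (c : G)).toMonoidHom.comp C.subtype) := by
    ext x; rfl
  rw [hcomp, ← Subgroup.map_map, Subgroup.subgroupOf_map_subtype,
    inf_of_le_left hKC, inf_of_le_left hH'C] at hmap
  refine ⟨g⁻¹ * (c : G), ?_⟩
  have : H = H'.map (MulAut.conj g⁻¹).toMonoidHom := by
    rw [hH', Subgroup.map_map]
    have : ((MulAut.conj g⁻¹).toMonoidHom.comp (MulAut.conj g).toMonoidHom)
        = MonoidHom.id G := by
      ext x
      show g⁻¹ * (g * x * g⁻¹) * g⁻¹⁻¹ = x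
      group
    rw [this, Subgroup.map_id]
  rw [this, ← hmap, Subgroup.map_map]
  congr 1
  ext x
  simp [mul_assoc]
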